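/- Let V : [0,∞) → ℝ be a differentiable, nonnegative function satisfying V'(t) ≤ -c₁·V(t)^{α₁} - c₂·V(t)^{α₂} for all t ≥ 0, where c₁, c₂ > 0, α₁ ∈ (0,1), and α₂ > 1. Then V(t) = 0 for all t ≥ T̄, where T̄ = 1/(c₁(1-α₁)) + 1/(c₂(α₂-1)). In particular the bound T̄ is independent of V(0). -/

import Mathlib

open Set

/-- Mean value bound: if `f' ≤ K` on `[a,b]`, then `f b ≤ f a + K * (b - a)`. -/
lemma deriv_upper_bound (f f' : ℝ → ℝ) {a b K : ℝ} (hab : a ≤ b)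
    (hd : ∀ t ∈ Set.Icc a b, HasDerivAt f (f' t) t)
    (hK : ∀ t ∈ Set.Icc a b, f' t ≤ K) :
    f b ≤ f a + K * (b - a) := by
  set g : ℝ → ℝ := fun t => K * t - f t with hg
  have hgd : ∀ t ∈ Set.Icc a b, HasDerivAt g (K - f' t) t := fun t ht => by
    exact (by simpa using ((hasDerivAt_id t).const_mul K).sub (hd t ht) :
      HasDerivAt ((fun y => K * y) - f) (K - f' t) t)
  have hmono : MonotoneOn g (Set.Icc a b) := by
    apply monotoneOn_of_deriv_nonneg (convex_Icc a b)
    · exact fun t ht => (hgd t ht).continuousAt.continuousWithinAt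
    · intro t ht
      rw [interior_Icc] at ht
      exact ((hgd t (Ioo_subset_Icc_self ht)).differentiableAt).differentiableWithinAt
    · intro t ht
      rw [interior_Icc] at ht
      rw [(hgd t (Ioo_subset_Icc_self ht)).deriv]
      have := hK t (Ioo_subset_Icc_self ht)
      linarith
  have := hmono (Set.left_mem_Icc.2 hab) (Set.right_mem_Icc.2 hab) hab
  simp only [hg] at this
  nlinarith

/-- Mean value bound: if `K ≤ f'` on `[a,b]`, then `f a + K * (b - a) ≤ f b`. -/
lemma deriv_lower_bound (f f' : ℝ → ℝ) {a b K : ℝ} (hab : a ≤ b)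
    (hd : ∀ t ∈ Set.Icc a b, HasDerivAt f (f' t) t)
    (hK : ∀ t ∈ Set.Icc a b, K ≤ f' t) :
    f a + K * (b - a) ≤ f b := by
  have h := deriv_upper_bound (fun t => -f t) (fun t => -f' t) hab
    (fun t ht => (hd t ht).neg) (fun t ht => neg_le_neg (hK t ht))
  linarith

theorem fixed_time_scalar (V V' : ℝ → ℝ) (c₁ c₂ α₁ α₂ : ℝ) (hc₁ : 0 < c₁) (hc₂ : 0 < c₂)
    (hα₁0 : 0 < α₁) (hα₁1 : α₁ < 1) (hα₂ : 1 < α₂)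
    (hdiff : ∀ t : ℝ, 0 ≤ t → HasDerivAt V (V' t) t)
    (hnonneg : ∀ t : ℝ, 0 ≤ t → 0 ≤ V t)
    (hineq : ∀ t : ℝ, 0 ≤ t → V' t ≤ -c₁ * (V t) ^ α₁ - c₂ * (V t) ^ α₂) :
    ∀ t : ℝ, 1 / (c₁ * (1 - α₁)) + 1 / (c₂ * (α₂ - 1)) ≤ t → V t = 0 := by
  have h1α₁ : 0 < 1 - α₁ := by linarith
  have hα₂1 : 0 < α₂ - 1 := by linarith
  set T₁ : ℝ := 1 / (c₁ * (1 - α₁)) with hT₁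
  set T₂ : ℝ := 1 / (c₂ * (α₂ - 1)) with hT₂
  have hT₁pos : 0 < T₁ := by positivity
  have hT₂pos : 0 < T₂ := by positivity
  -- V' ≤ 0 on [0,∞)
  have hV'le : ∀ t : ℝ, 0 ≤ t → V' t ≤ 0 := by
    intro t ht
    have h1 : 0 ≤ (V t) ^ α₁ := Real.rpow_nonneg (hnonneg t ht) _
    have h2 : 0 ≤ (V t) ^ α₂ := Real.rpow_nonneg (hnonneg t ht) _
    have := hineq t ht
    nlinarith
  -- V antitone on [0,∞)
  have hanti : AntitoneOn V (Set.Ici 0) := by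
    apply antitoneOn_of_deriv_nonpos (convex_Ici 0)
    · exact fun t ht => (hdiff t ht).continuousAt.continuousWithinAt
    · intro t ht
      rw [interior_Ici] at ht
      exact ((hdiff t ht.le).differentiableAt).differentiableWithinAt
    · intro t ht
      rw [interior_Ici] at ht
      rw [(hdiff t ht.le).deriv]
      exact hV'le t ht.le
  -- Stage A : V T₂ ≤ 1
  have hA : V T₂ ≤ 1 := by
    by_contra hVT₂
    push_neg at hVT₂
    have hVgt1 : ∀ t ∈ Set.Icc 0 T₂, 1 < V t := by
      intro t ht
      have := hanti (Set.mem_Ici.2 ht.1) (Set.mem_Ici.2 hT₂pos.le) ht.2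
      linarith
    set W : ℝ → ℝ := fun t => (V t) ^ (1 - α₂) with hW
    have hWd : ∀ t ∈ Set.Icc 0 T₂, HasDerivAt W
        ((1 - α₂) * (V t) ^ (1 - α₂ - 1) * V' t) t := by
      intro t ht
      have hVne : V t ≠ 0 := by have := hVgt1 t ht; linarith
      exact (Real.hasDerivAt_rpow_const (Or.inl hVne)).comp t (hdiff t ht.1)
    have hK : ∀ t ∈ Set.Icc 0 T₂,
        c₂ * (α₂ - 1) ≤ (1 - α₂) * (V t) ^ (1 - α₂ - 1) * V' t := by
      intro t ht
      have hVpos : 0 < V t := lt_trans one_pos (hVgt1 t ht)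
      have hp : 0 < (V t) ^ (1 - α₂ - 1) := Real.rpow_pos_of_pos hVpos _
      have hV' : V' t ≤ -c₂ * (V t) ^ α₂ := by
        have h1 : 0 ≤ (V t) ^ α₁ := Real.rpow_nonneg hVpos.le _
        have := hineq t ht.1
        nlinarith
      have key : (1 - α₂) * (V t) ^ (1 - α₂ - 1) * V' t ≥
          (1 - α₂) * (V t) ^ (1 - α₂ - 1) * (-c₂ * (V t) ^ α₂) := by
        have hneg : (1 - α₂) * (V t) ^ (1 - α₂ - 1) < 0 := by nlinarith
        nlinarith
      have heq : (V t) ^ (1 - α₂ - 1) * (V t) ^ α₂ = 1 := by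
        rw [← Real.rpow_add hVpos, show (1:ℝ) - α₂ - 1 + α₂ = 0 by ring, Real.rpow_zero]
      calc c₂ * (α₂ - 1) = (1 - α₂) * ((V t) ^ (1 - α₂ - 1) * (V t) ^ α₂) * (-c₂) := by
            rw [heq]; ring
        _ = (1 - α₂) * (V t) ^ (1 - α₂ - 1) * (-c₂ * (V t) ^ α₂) := by ring
        _ ≤ (1 - α₂) * (V t) ^ (1 - α₂ - 1) * V' t := key
    have hlb := deriv_lower_bound W _ hT₂pos.le hWd hK
    have hW0pos : 0 < W 0 := Real.rpow_pos_of_pos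
      (lt_trans one_pos (hVgt1 0 ⟨le_refl 0, hT₂pos.le⟩)) _
    have hWT₂lt1 : W T₂ < 1 :=
      Real.rpow_lt_one_of_one_lt_of_neg hVT₂ (by linarith)
    have hmul : c₂ * (α₂ - 1) * (T₂ - 0) = 1 := by
      rw [sub_zero, hT₂]; exact mul_one_div_cancel (by positivity)
    rw [sub_zero] at hmul
    nlinarith
  -- Stage B : V (T₂ + T₁) = 0
  have hT₂T₁ : (0:ℝ) ≤ T₂ + T₁ := by linarith
  have hB : V (T₂ + T₁) = 0 := by
    refine le_antisymm ?_ (hnonneg _ hT₂T₁)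
    by_contra hpos
    push_neg at hpos
    have hVpos : ∀ t ∈ Set.Icc T₂ (T₂ + T₁), 0 < V t := by
      intro t ht
      have := hanti (Set.mem_Ici.2 (le_trans hT₂pos.le ht.1))
        (Set.mem_Ici.2 hT₂T₁) ht.2
      linarith
    set Y : ℝ → ℝ := fun t => (V t) ^ (1 - α₁) with hY
    have hYd : ∀ t ∈ Set.Icc T₂ (T₂ + T₁), HasDerivAt Y
        ((1 - α₁) * (V t) ^ (1 - α₁ - 1) * V' t) t := by
      intro t ht
      have hVne : V t ≠ 0 := (hVpos t ht).ne'
      exact (Real.hasDerivAt_rpow_const (Or.inl hVne)).comp t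
        (hdiff t (le_trans hT₂pos.le ht.1))
    have hK : ∀ t ∈ Set.Icc T₂ (T₂ + T₁),
        (1 - α₁) * (V t) ^ (1 - α₁ - 1) * V' t ≤ -(c₁ * (1 - α₁)) := by
      intro t ht
      have hVt := hVpos t ht
      have hp : 0 < (V t) ^ (1 - α₁ - 1) := Real.rpow_pos_of_pos hVt _
      have hV' : V' t ≤ -c₁ * (V t) ^ α₁ := by
        have h2 : 0 ≤ (V t) ^ α₂ := Real.rpow_nonneg hVt.le _
        have := hineq t (le_trans hT₂pos.le ht.1)
        nlinarith
      have hposcoef : 0 < (1 - α₁) * (V t) ^ (1 - α₁ - 1) := by positivity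
      have heq : (V t) ^ (1 - α₁ - 1) * (V t) ^ α₁ = 1 := by
        rw [← Real.rpow_add hVt, show (1:ℝ) - α₁ - 1 + α₁ = 0 by ring, Real.rpow_zero]
      calc (1 - α₁) * (V t) ^ (1 - α₁ - 1) * V' t
          ≤ (1 - α₁) * (V t) ^ (1 - α₁ - 1) * (-c₁ * (V t) ^ α₁) := by nlinarith
        _ = -(c₁ * (1 - α₁)) * ((V t) ^ (1 - α₁ - 1) * (V t) ^ α₁) := by ring
        _ = -(c₁ * (1 - α₁)) := by rw [heq]; ring
    have hub := deriv_upper_bound Y _ (by linarith : T₂ ≤ T₂ + T₁) hYd hK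
    have hYT₂ : Y T₂ ≤ 1 :=
      Real.rpow_le_one (hnonneg T₂ hT₂pos.le) hA (by linarith)
    have hYpos : 0 < Y (T₂ + T₁) := Real.rpow_pos_of_pos hpos _
    have hmul : c₁ * (1 - α₁) * (T₂ + T₁ - T₂) = 1 := by
      rw [show T₂ + T₁ - T₂ = T₁ by ring, hT₁]
      field_simp
    nlinarith
  -- conclude
  intro t ht
  have ht' : T₂ + T₁ ≤ t := by linarith
  have := hanti (Set.mem_Ici.2 hT₂T₁) (Set.mem_Ici.2 (le_trans hT₂T₁ ht')) ht'
  have := hnonneg t (le_trans hT₂T₁ ht')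
  linarith [hB ▸ ‹V t ≤ V (T₂ + T₁)›]
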